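/- Let α : [0,∞) → [0,∞) be differentiable with α(0) = 0, and suppose that for constants λ > 0, C > 0, N ≥ 1 it satisfies α'(t) ≤ −2λ α(t) + (C/√N) α(t)^{1/2} + C/N for all t ≥ 0. Then for every δ ∈ (0, λ) there is a constant C' > 0, depending only on C and δ (but not on N or t), such that α(t) ≤ C'/N for all t ≥ 0. -/

import Mathlib

/-- Uniform-in-time Gronwall estimate: if `α(0)=0`, `α ≥ 0` and
`α' ≤ -2λα + (C/√N)√α + C/N` on `[0,∞)`, then for every `δ ∈ (0,λ)` there is a
constant `C'` depending only on `C` and `δ` (not on `N` or `t`) with `α(t) ≤ C'/N`. -/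
theorem stmt_2 (lam C δ : ℝ) (hlam : 0 < lam) (hC : 0 < C) (hδ : 0 < δ) (hδlam : δ < lam) :
    ∃ C' > 0, ∀ (N : ℝ), 1 ≤ N → ∀ α α' : ℝ → ℝ,
      α 0 = 0 → (∀ t, 0 ≤ t → 0 ≤ α t) →
      (∀ t, 0 ≤ t → HasDerivAt α (α' t) t) →
      (∀ t, 0 ≤ t →
        α' t ≤ -2 * lam * α t + (C / Real.sqrt N) * Real.sqrt (α t) + C / N) →
      ∀ t, 0 ≤ t → α t ≤ C' / N := by
  set C' : ℝ := max ((C / δ) ^ 2) ((C + 1) / δ) with hC'def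
  have hC'pos : 0 < C' := lt_of_lt_of_le (by positivity) (le_max_right _ _)
  -- key numeric inequality
  have hsqrt : C ≤ δ * Real.sqrt C' := by
    have h1 : C / δ ≤ Real.sqrt C' := by
      have := Real.sqrt_le_sqrt (le_max_left ((C / δ) ^ 2) ((C + 1) / δ))
      rwa [Real.sqrt_sq (by positivity)] at this
    calc C = δ * (C / δ) := by field_simp
    _ ≤ δ * Real.sqrt C' := by nlinarith
  have hkey : C * Real.sqrt C' + C < 2 * lam * C' := by
    have h2 : C * Real.sqrt C' ≤ δ * C' := by
      have := mul_le_mul_of_nonneg_right hsqrt (Real.sqrt_nonneg C')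
      rwa [mul_assoc, Real.mul_self_sqrt hC'pos.le] at this
    have h3 : C + 1 ≤ δ * C' := by
      have := le_max_right ((C / δ) ^ 2) ((C + 1) / δ)
      calc C + 1 = δ * ((C + 1) / δ) := by field_simp
      _ ≤ δ * C' := by nlinarith
    nlinarith
  refine ⟨C', hC'pos, fun N hN α α' hα0 hαnn hderiv hode t ht => ?_⟩
  have hNpos : (0 : ℝ) < N := lt_of_lt_of_le one_pos hN
  have key : ∀ ⦃x⦄, x ∈ Set.Icc (0 : ℝ) t → α x ≤ (fun _ : ℝ => C' / N) x := by
    refine image_le_of_deriv_right_lt_deriv_boundary' (f' := α') (B := fun _ => C' / N) (B' := fun _ => 0) ?_ ?_ ?_ ?_ ?_ ?_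
    · exact fun x hx => ((hderiv x hx.1).continuousAt.continuousWithinAt)
    · exact fun x hx => (hderiv x hx.1).hasDerivWithinAt
    · simpa [hα0] using (div_nonneg hC'pos.le hNpos.le)
    · exact continuousOn_const
    · exact fun x _ => hasDerivWithinAt_const _ _ _
    · intro x hx hfx
      have hb := hode x hx.1
      rw [hfx] at hb
      have hsq : Real.sqrt (C' / N) = Real.sqrt C' / Real.sqrt N := by
        rw [Real.sqrt_div hC'pos.le]
      have hsqrtN : Real.sqrt N * Real.sqrt N = N := Real.mul_self_sqrt hNpos.le
      have hNe : Real.sqrt N ≠ 0 := by positivity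
      have hterm : (C / Real.sqrt N) * Real.sqrt (C' / N) = C * Real.sqrt C' / N := by
        rw [hsq, div_mul_div_comm, hsqrtN]
      have : -2 * lam * (C' / N) + (C / Real.sqrt N) * Real.sqrt (C' / N) + C / N
          = (C * Real.sqrt C' + C - 2 * lam * C') / N := by
        rw [hterm]; field_simp; ring
      rw [this] at hb
      calc α' x ≤ (C * Real.sqrt C' + C - 2 * lam * C') / N := hb
      _ < 0 := div_neg_of_neg_of_pos (by linarith) hNpos
  exact key (Set.mem_Icc.mpr ⟨ht, le_refl t⟩)
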